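/- Let n ≥ 1 be an integer and let r ≥ 1, 1 ≤ q ≤ 2 and 0 < α ≤ 2/(r(n+1)) be real numbers. Then the function t ↦ (1−t²)^{(n+1)α/2}/(1−t^q)^{1/r} is monotonically increasing on the interval (0,1); equivalently, for all 0 < a ≤ b < 1 one has (1−a²)^{(n+1)α/2}·(1−b^q)^{1/r} ≤ (1−b²)^{(n+1)α/2}·(1−a^q)^{1/r}. -/

import Mathlib

open Set Real

private lemma core_concave {s u v : ℝ} (hs0 : 0 ≤ s) (hs1 : s ≤ 1)
    (hu : 0 < u) (huv : u ≤ v) (hv : v < 1) :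
    (1 - u) * (1 - v ^ s) ≤ (1 - v) * (1 - u ^ s) := by
  have hu1 : u < 1 := lt_of_le_of_lt huv hv
  have hY : (0:ℝ) < 1 - u := by linarith
  have hC := (Real.concaveOn_rpow hs0 hs1).2 (show u ∈ Ici (0:ℝ) from hu.le)
    (show (1:ℝ) ∈ Ici (0:ℝ) by norm_num)
    (show (0:ℝ) ≤ (1 - v) / (1 - u) from div_nonneg (by linarith) (by linarith))
    (show (0:ℝ) ≤ (v - u) / (1 - u) from div_nonneg (by linarith) (by linarith))
    (show (1 - v) / (1 - u) + (v - u) / (1 - u) = 1 by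
      rw [← add_div, div_eq_one_iff_eq hY.ne']; ring)
  simp only [smul_eq_mul, mul_one, Real.one_rpow] at hC
  have hx : (1 - v) / (1 - u) * u + (v - u) / (1 - u) = v := by
    rw [div_mul_eq_mul_div, ← add_div, div_eq_iff hY.ne']; ring
  rw [hx] at hC
  rw [div_mul_eq_mul_div, ← add_div, div_le_iff₀ hY] at hC
  -- hC : (1-v) * u^s + (v-u) ≤ v^s * (1-u)
  nlinarith [hC]

private lemma main_ineq {r q β a b : ℝ} (hr : 1 ≤ r) (hq1 : 1 ≤ q) (hq2 : q ≤ 2)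
    (hβ0 : 0 < β) (hβr : β ≤ 1 / r) (ha : 0 < a) (hab : a ≤ b) (hb : b < 1) :
    (1 - a ^ (2:ℝ)) ^ β * (1 - b ^ q) ^ (1 / r) ≤
      (1 - b ^ (2:ℝ)) ^ β * (1 - a ^ q) ^ (1 / r) := by
  have hrpos : (0:ℝ) < r := lt_of_lt_of_le one_pos hr
  have hb0 : 0 < b := lt_of_lt_of_le ha hab
  have ha1 : a < 1 := lt_of_le_of_lt hab hb
  set s := q / 2 with hs
  have hs0 : 0 ≤ s := by positivity
  have hs1 : s ≤ 1 := by rw [hs]; linarith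
  set u := a ^ (2:ℝ) with hudef
  set v := b ^ (2:ℝ) with hvdef
  have hu : 0 < u := Real.rpow_pos_of_pos ha _
  have huv : u ≤ v := Real.rpow_le_rpow ha.le hab (by norm_num)
  have hv : v < 1 := Real.rpow_lt_one hb0.le hb (by norm_num)
  have hu1 : u < 1 := lt_of_le_of_lt huv hv
  have hus : u ^ s = a ^ q := by
    rw [hudef, ← Real.rpow_mul ha.le]
    congr 1
    rw [hs]; ring
  have hvs : v ^ s = b ^ q := by
    rw [hvdef, ← Real.rpow_mul hb0.le]
    congr 1
    rw [hs]; ring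
  have hcore := core_concave hs0 hs1 hu huv hv
  rw [hus, hvs] at hcore
  have hA : (0:ℝ) < 1 - a ^ q :=
    sub_pos.mpr (Real.rpow_lt_one ha.le ha1 (by linarith))
  have hB : (0:ℝ) < 1 - b ^ q :=
    sub_pos.mpr (Real.rpow_lt_one hb0.le hb (by linarith))
  have hX : (0:ℝ) < 1 - v := by linarith
  have hY : (0:ℝ) < 1 - u := by linarith
  -- step 1 : ((1-u)/(1-v))^β ≤ ((1-u)/(1-v))^(1/r)
  have h1 : ((1 - u) / (1 - v)) ^ β ≤ ((1 - u) / (1 - v)) ^ (1 / r) :=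
    Real.rpow_le_rpow_of_exponent_le ((one_le_div hX).mpr (by linarith)) hβr
  -- step 2 : ((1-u)/(1-v))^(1/r) ≤ ((1-a^q)/(1-b^q))^(1/r)
  have h2 : ((1 - u) / (1 - v)) ^ (1 / r) ≤ ((1 - a ^ q) / (1 - b ^ q)) ^ (1 / r) := by
    apply Real.rpow_le_rpow (by positivity) _ (by positivity)
    rw [div_le_div_iff₀ hX hB]
    nlinarith [hcore]
  have h3 := le_trans h1 h2
  rw [Real.div_rpow hY.le hX.le, Real.div_rpow hA.le hB.le,
    div_le_div_iff₀ (Real.rpow_pos_of_pos hX _) (Real.rpow_pos_of_pos hB _)] at h3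
  linarith [h3]

/-- For an integer `n ≥ 1` and real numbers `r ≥ 1`, `1 ≤ q ≤ 2`,
`0 < α ≤ 2/(r(n+1))`, the function `t ↦ (1−t²)^{(n+1)α/2} / (1−t^q)^{1/r}` is
monotonically increasing on `(0,1)`; equivalently, for `0 < a ≤ b < 1`,
`(1−a²)^{(n+1)α/2} (1−b^q)^{1/r} ≤ (1−b²)^{(n+1)α/2} (1−a^q)^{1/r}`. -/
theorem stmt_17 (n : ℕ) (hn : 1 ≤ n) (r q α : ℝ)
    (hr : 1 ≤ r) (hq1 : 1 ≤ q) (hq2 : q ≤ 2)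
    (hα0 : 0 < α) (hα : α ≤ 2 / (r * (n + 1))) :
    MonotoneOn (fun t : ℝ =>
        (1 - t ^ (2:ℝ)) ^ (((n : ℝ) + 1) * α / 2) / (1 - t ^ q) ^ (1 / r))
      (Ioo (0:ℝ) 1) ∧
    ∀ a b : ℝ, 0 < a → a ≤ b → b < 1 →
      (1 - a ^ (2:ℝ)) ^ (((n : ℝ) + 1) * α / 2) * (1 - b ^ q) ^ (1 / r) ≤
      (1 - b ^ (2:ℝ)) ^ (((n : ℝ) + 1) * α / 2) * (1 - a ^ q) ^ (1 / r) := by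
  have hrpos : (0:ℝ) < r := lt_of_lt_of_le one_pos hr
  have hn1 : (0:ℝ) < (n:ℝ) + 1 := by positivity
  set β := ((n : ℝ) + 1) * α / 2 with hβdef
  have hβ0 : 0 < β := by positivity
  have hβr : β ≤ 1 / r := by
    have h2 : α * (r * ((n:ℝ) + 1)) ≤ 2 := (le_div_iff₀ (by positivity)).mp hα
    rw [le_div_iff₀ hrpos, hβdef]
    nlinarith
  constructor
  · intro x hx y hy hxy
    simp only
    have hx0 := hx.1
    have hy1 := hy.2
    have hy0 := hy.1
    have hx1 := hx.2
    have hBx : (0:ℝ) < 1 - x ^ q :=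
      sub_pos.mpr (Real.rpow_lt_one hx0.le hx1 (by linarith))
    have hBy : (0:ℝ) < 1 - y ^ q :=
      sub_pos.mpr (Real.rpow_lt_one hy0.le hy1 (by linarith))
    have hXx : (0:ℝ) < 1 - x ^ (2:ℝ) :=
      sub_pos.mpr (Real.rpow_lt_one hx0.le hx1 (by norm_num))
    have hXy : (0:ℝ) < 1 - y ^ (2:ℝ) :=
      sub_pos.mpr (Real.rpow_lt_one hy0.le hy1 (by norm_num))
    rw [div_le_div_iff₀ (Real.rpow_pos_of_pos hBx _) (Real.rpow_pos_of_pos hBy _)]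
    exact main_ineq hr hq1 hq2 hβ0 hβr hx0 hxy hy1
  · intro a b ha hab hb
    exact main_ineq hr hq1 hq2 hβ0 hβr ha hab hb
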